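/- For a GNS S ⊆ ℕ^d, the set M(S) = {0} ∪ {h ∈ H(S) : the only element of S below h in the componentwise order is 0} is the minimal subset T of ℕ^d with the property that every x ∈ ℕ^d can be written as x = t + s with t ∈ T and s ∈ S. -/

import Mathlib

/-- `M(S) = {0} ∪ M(S)*` where `M(S)*` is the set of fundamental holes:
holes `h` such that the only element of `S` below `h` is `0`. -/
def MSet {d : ℕ} (S : Set (Fin d → ℕ)) : Set (Fin d → ℕ) :=
  {0} ∪ {h | h ∈ Sᶜ ∧ ∀ s ∈ S, s ≤ h → s = 0}

/-- `M(S)` is the minimal subset `T ⊆ ℕ^d` such that every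
`x ∈ ℕ^d` decomposes as `x = t + s` with `t ∈ T`, `s ∈ S`. -/
theorem stmt4 {d : ℕ} (S : Set (Fin d → ℕ))
    (h0 : 0 ∈ S) (hadd : ∀ a ∈ S, ∀ b ∈ S, a + b ∈ S) (hfin : Sᶜ.Finite) :
    (∀ x : Fin d → ℕ, ∃ t ∈ MSet S, ∃ s ∈ S, x = t + s) ∧
    (∀ T : Set (Fin d → ℕ), (∀ x : Fin d → ℕ, ∃ t ∈ T, ∃ s ∈ S, x = t + s) →
      MSet S ⊆ T) := by
  constructor
  · intro x
    -- the set of elements of S below x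
    set A : Set (Fin d → ℕ) := {s | s ∈ S ∧ s ≤ x} with hA
    have hAfin : A.Finite := by
      apply (Set.finite_Icc (0 : Fin d → ℕ) x).subset
      intro s hs
      exact Set.mem_Icc.mpr ⟨zero_le, hs.2⟩
    have hAne : A.Nonempty := ⟨0, h0, zero_le⟩
    obtain ⟨s, hsA, hsmax'⟩ := Set.Finite.exists_maximalFor id A hAfin hAne
    have hsmax : ∀ a' ∈ A, id s ≤ id a' → id s = id a' := fun a' ha' h => le_antisymm h (hsmax' ha' h)
    simp only [id] at hsmax
    obtain ⟨hsS, hsle⟩ := hsA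
    set t : Fin d → ℕ := x - s with ht
    have hts : t + s = x := tsub_add_cancel_of_le hsle
    -- any element of S below t is 0
    have key : ∀ s' ∈ S, s' ≤ t → s' = 0 := by
      intro s' hs'S hs't
      have hmem : s + s' ∈ A := by
        refine ⟨hadd s hsS s' hs'S, ?_⟩
        calc s + s' ≤ s + t := add_le_add_right hs't s
        _ = x := by rw [add_comm]; exact hts
      have := hsmax (s + s') hmem (le_add_right le_rfl)
      have h' : s + s' = s + 0 := by rw [add_zero]; exact this.symm
      exact add_left_cancel h'
    refine ⟨t, ?_, s, hsS, hts.symm⟩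
    by_cases htz : t = 0
    · left; exact htz
    · right
      refine ⟨?_, key⟩
      intro htS
      exact htz (key t htS le_rfl)
  · intro T hT m hm
    rcases hm with hm | ⟨hmH, hmkey⟩
    · -- m = 0 : decompose 0
      obtain ⟨t, htT, s, hsS, hts⟩ := hT 0
      have := (add_eq_zero.mp hts.symm)
      simp only [Set.mem_singleton_iff] at hm
      rw [hm, ← this.1]; exact htT
    · obtain ⟨t, htT, s, hsS, hts⟩ := hT m
      have hsm : s ≤ m := hts ▸ le_add_self
      have : s = 0 := hmkey s hsS hsm
      rw [this, add_zero] at hts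
      rw [hts]; exact htT
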